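/- Consider the splitting model on Z^d (d ≥ 1) with any valid splitting order, h < 1, n ≥ 0, and suppose the model stabilizes. For k ≥ 1 let Q_k(x) = {y ∈ Z^d : max_i |x_i − y_i| ≤ k}, u^{(k)}(x) = (2k+1)^{−d} Σ_{y ∈ Q_k(x)} u(y), and T^{(k)} = {x : Q_k(x) ⊆ T}. Then for every x ∈ T^{(k)}: Δu^{(k)}(x) ≥ k/(2k+1) − h − (n−h)·(2k+1)^{−d}·1[0 ∈ Q_k(x)]. -/

import Mathlib

open scoped BigOperators

/-- The nearest neighbor of `x ∈ ℤ^d` obtained by shifting coordinate `i` by `ε`. -/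
def nbr {d : ℕ} (x : Fin d → ℤ) (i : Fin d) (ε : ℤ) : Fin d → ℤ :=
  Function.update x i (x i + ε)

/-- Nearest-neighbor adjacency in `ℤ^d`. -/
def Adj {d : ℕ} (x y : Fin d → ℤ) : Prop :=
  (∑ i, |x i - y i|) = 1

/-- The splitting model on `ℤ^d` with initial mass `n` at the origin and background
mass `h` at every other site, together with a splitting order: `S (t+1)` is the set
of sites that split at time `t+1` (a subset of the sites unstable at time `t`,
i.e. those of mass `≥ 1`), and the mass `η` evolves by Zhang's toppling rule:
a splitting site loses all its mass, distributing a fraction `1/(2d)` of it to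
each of its `2d` nearest neighbors. -/
structure SplittingModel (d : ℕ) (n h : ℝ) where
  η : ℕ → (Fin d → ℤ) → ℝ
  S : ℕ → Set (Fin d → ℤ)
  init_origin : η 0 0 = n
  init_other : ∀ x : Fin d → ℤ, x ≠ 0 → η 0 x = h
  S_zero : S 0 = ∅
  S_subset : ∀ t, S (t + 1) ⊆ {x | 1 ≤ η t x}
  evolve : ∀ t x, η (t + 1) x =
      (S (t + 1))ᶜ.indicator (η t) x
        + (1 / (2 * (d : ℝ))) * ∑ i : Fin d,
            ((S (t + 1)).indicator (η t) (nbr x i 1)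
              + (S (t + 1)).indicator (η t) (nbr x i (-1)))

namespace SplittingModel

variable {d : ℕ} {n h : ℝ}

/-- A valid splitting order: some unstable site splits whenever there is an unstable
site, and every site that is unstable at some time eventually splits. -/
def Valid (M : SplittingModel d n h) : Prop :=
  (∀ t, {x | 1 ≤ M.η t x}.Nonempty → (M.S (t + 1)).Nonempty) ∧
    (∀ t x, 1 ≤ M.η t x → ∃ t₀, 1 ≤ t₀ ∧ x ∈ M.S (t + t₀))

/-- The parallel splitting order (the splitting automaton): at every time step,
every unstable site splits. -/
def Parallel (M : SplittingModel d n h) : Prop :=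
  ∀ t, M.S (t + 1) = {x | 1 ≤ M.η t x}

/-- The set of sites that split at least once up to (and including) time `t`. -/
def Tt (M : SplittingModel d n h) (t : ℕ) : Set (Fin d → ℤ) :=
  ⋃ t' ∈ Set.Icc 1 t, M.S t'

/-- The set of sites that split at least once. -/
def T (M : SplittingModel d n h) : Set (Fin d → ℤ) :=
  ⋃ t, M.S t

/-- The model stabilizes: every site splits only finitely many times. -/
def Stabilizes (M : SplittingModel d n h) : Prop :=
  ∀ x, {t | x ∈ M.S t}.Finite

/-- The total mass `u x` emitted from the site `x` during stabilization. -/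
noncomputable def emit (M : SplittingModel d n h) (x : Fin d → ℤ) : ℝ :=
  ∑' t : ℕ, (M.S (t + 1)).indicator (M.η t) x

end SplittingModel

/-- The cube `Q_k(x) = {y ∈ ℤ^d : max_i |x i - y i| ≤ k}` centered at `x` with
radius `k`. -/
noncomputable def Qcube {d : ℕ} (k : ℕ) (x : Fin d → ℤ) : Finset (Fin d → ℤ) :=
  Finset.Icc (fun i => x i - k) (fun i => x i + k)

/-- The discrete Laplacian `Δf(x) = (1/(2d)) ∑_{y ∼ x} f y - f x`. -/
noncomputable def lap {d : ℕ} (f : (Fin d → ℤ) → ℝ) (x : Fin d → ℤ) : ℝ :=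
  (1 / (2 * (d : ℝ))) * (∑ i : Fin d, (f (nbr x i 1) + f (nbr x i (-1)))) - f x

/-- The cube average `u^{(k)}(x) = (2k+1)^{-d} ∑_{y ∈ Q_k(x)} u y` of the emitted
mass. -/
noncomputable def SplittingModel.avgEmit {d : ℕ} {n h : ℝ}
    (M : SplittingModel d n h) (k : ℕ) (x : Fin d → ℤ) : ℝ :=
  ((2 * (k : ℝ) + 1) ^ d)⁻¹ * ∑ y ∈ Qcube k x, M.emit y


/-! ### Auxiliary lemmas -/

lemma nbr_apply {d : ℕ} (x : Fin d → ℤ) (i j : Fin d) (ε : ℤ) :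
    nbr x i ε j = if j = i then x i + ε else x j := by
  simp [nbr, Function.update]

lemma nbr_nbr {d : ℕ} (x : Fin d → ℤ) (i : Fin d) (ε : ℤ) : nbr (nbr x i ε) i (-ε) = x := by
  simp [nbr, Function.update_idem, Function.update_self, Function.update_eq_self]

lemma nbr_inj {d : ℕ} (i : Fin d) (ε : ℤ) :
    Function.Injective (fun y : Fin d → ℤ => nbr y i ε) := by
  intro a b hab
  have := congrArg (fun w => nbr w i (-ε)) hab
  simpa [nbr_nbr] using this

lemma mem_Qcube {d k : ℕ} {x y : Fin d → ℤ} :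
    y ∈ Qcube k x ↔ ∀ i, x i - k ≤ y i ∧ y i ≤ x i + k := by
  simp [Qcube, Finset.mem_Icc, Pi.le_def, forall_and]

lemma card_Qcube {d : ℕ} (k : ℕ) (x : Fin d → ℤ) : (Qcube k x).card = (2 * k + 1) ^ d := by
  rw [Qcube, Pi.card_Icc]
  have hc : ∀ i, (Finset.Icc (x i - (k:ℤ)) (x i + k)).card = 2 * k + 1 := by
    intro i; rw [Int.card_Icc]; omega
  simp [hc]

lemma Qcube_nbr {d k : ℕ} (x : Fin d → ℤ) (i : Fin d) (ε : ℤ) :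
    Qcube k (nbr x i ε) = (Qcube k x).image (fun y => nbr y i ε) := by
  ext y
  simp only [Finset.mem_image, mem_Qcube]
  constructor
  · intro hy
    refine ⟨nbr y i (-ε), fun j => ?_, by have := nbr_nbr y i (-ε); simpa using this⟩
    have hj := hy j
    rcases eq_or_ne j i with rfl | hne
    · simp [nbr_apply] at hj ⊢; omega
    · simp [nbr_apply, hne] at hj ⊢; omega
  · rintro ⟨z, hz, rfl⟩ j
    have hj := hz j
    rcases eq_or_ne j i with rfl | hne
    · simp [nbr_apply]; omega
    · simp [nbr_apply, hne] at hj ⊢; omega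

lemma sum_Qcube_nbr {d k : ℕ} (x : Fin d → ℤ) (i : Fin d) (ε : ℤ) (f : (Fin d → ℤ) → ℝ) :
    ∑ y ∈ Qcube k (nbr x i ε), f y = ∑ y ∈ Qcube k x, f (nbr y i ε) := by
  rw [Qcube_nbr, Finset.sum_image fun a _ b _ hab => nbr_inj i ε hab]

lemma Qcube_subset_succ {d k : ℕ} {x y : Fin d → ℤ} (hy : y ∈ Qcube k x) :
    y ∈ Qcube (k + 1) x := by
  rw [mem_Qcube] at hy ⊢
  intro j; have := hy j; push_cast; omega

lemma nbr_mem_Qcube_succ {d k : ℕ} {x y : Fin d → ℤ} {i : Fin d} {ε : ℤ}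
    (hy : y ∈ Qcube k x) (hε : ε = 1 ∨ ε = -1) : nbr y i ε ∈ Qcube (k + 1) x := by
  rw [mem_Qcube] at hy ⊢
  intro j
  have hj := hy j
  rcases eq_or_ne j i with rfl | hne
  · simp [nbr_apply]; push_cast; rcases hε with rfl | rfl <;> omega
  · simp [nbr_apply, hne]; push_cast; omega

/-- The lower slab of the cube: all coordinates as in `Qcube`, except the `i`-th
upper bound which is one less. -/
noncomputable def Qside {d : ℕ} (k : ℕ) (x : Fin d → ℤ) (i : Fin d) : Finset (Fin d → ℤ) :=
  Finset.Icc (fun j => x j - k) (fun j => if j = i then x j + (k:ℤ) - 1 else x j + k)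

lemma mem_Qside {d k : ℕ} {x y : Fin d → ℤ} {i : Fin d} :
    y ∈ Qside k x i ↔ ∀ j, x j - k ≤ y j ∧ y j ≤ (if j = i then x j + (k:ℤ) - 1 else x j + k) := by
  simp [Qside, Finset.mem_Icc, Pi.le_def, forall_and]

lemma Qside_subset {d k : ℕ} {x : Fin d → ℤ} {i : Fin d} : Qside k x i ⊆ Qcube k x := by
  intro y hy
  rw [mem_Qside] at hy
  rw [mem_Qcube]
  intro j
  have := hy j
  split at this <;> omega

lemma Qside_nbr_mem {d k : ℕ} {x y : Fin d → ℤ} {i : Fin d} (hy : y ∈ Qside k x i) :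
    nbr y i 1 ∈ Qcube k x := by
  rw [mem_Qside] at hy
  rw [mem_Qcube]
  intro j
  have hj := hy j
  rcases eq_or_ne j i with rfl | hne
  · simp [nbr_apply] at hj ⊢; omega
  · simp [nbr_apply, hne] at hj ⊢; omega

lemma card_Qside {d : ℕ} (k : ℕ) (x : Fin d → ℤ) (i : Fin d) :
    (Qside k x i).card = 2 * k * (2 * k + 1) ^ (d - 1) := by
  rw [Qside, Pi.card_Icc]
  rw [← Finset.mul_prod_erase Finset.univ _ (Finset.mem_univ i)]
  have h1 : (Finset.Icc (x i - (k:ℤ)) (if i = i then x i + (k:ℤ) - 1 else x i + k)).card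
      = 2 * k := by
    rw [if_pos rfl, Int.card_Icc]; omega
  have h2 : ∀ j ∈ Finset.univ.erase i,
      (Finset.Icc (x j - (k:ℤ)) (if j = i then x j + (k:ℤ) - 1 else x j + k)).card
        = 2 * k + 1 := by
    intro j hj
    rw [if_neg (Finset.mem_erase.mp hj).1, Int.card_Icc]; omega
  rw [h1, Finset.prod_congr rfl h2, Finset.prod_const,
    Finset.card_erase_of_mem (Finset.mem_univ i), Finset.card_univ, Fintype.card_fin]

namespace SplittingModel

variable {d : ℕ} {n h : ℝ}

/-- Emission up to (and excluding) time `t`. -/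
noncomputable def E (M : SplittingModel d n h) (t : ℕ) (x : Fin d → ℤ) : ℝ :=
  ∑ s ∈ Finset.range t, (M.S (s + 1)).indicator (M.η s) x

lemma ind_nonneg (M : SplittingModel d n h) (t : ℕ) (x : Fin d → ℤ) :
    0 ≤ (M.S (t + 1)).indicator (M.η t) x := by
  by_cases hx : x ∈ M.S (t + 1)
  · rw [Set.indicator_of_mem hx]; exact le_trans zero_le_one (M.S_subset t hx)
  · rw [Set.indicator_of_notMem hx]

lemma ind_ge_one (M : SplittingModel d n h) {t : ℕ} {x : Fin d → ℤ}
    (hx : x ∈ M.S (t + 1)) : 1 ≤ (M.S (t + 1)).indicator (M.η t) x := by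
  rw [Set.indicator_of_mem hx]; exact M.S_subset t hx

lemma evolve' (M : SplittingModel d n h) (t : ℕ) (x : Fin d → ℤ) :
    M.η (t + 1) x = M.η t x - (M.S (t + 1)).indicator (M.η t) x
      + (1 / (2 * (d : ℝ))) * ∑ i : Fin d,
          ((M.S (t + 1)).indicator (M.η t) (nbr x i 1)
            + (M.S (t + 1)).indicator (M.η t) (nbr x i (-1))) := by
  rw [M.evolve t x]
  congr 1
  by_cases hx : x ∈ M.S (t + 1)
  · rw [Set.indicator_of_notMem (by simpa using hx), Set.indicator_of_mem hx]; ring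
  · rw [Set.indicator_of_mem (by simpa using hx), Set.indicator_of_notMem hx]; ring

lemma eta_eq (M : SplittingModel d n h) (t : ℕ) (x : Fin d → ℤ) :
    M.η t x = M.η 0 x - M.E t x
      + (1 / (2 * (d : ℝ))) * ∑ i : Fin d, (M.E t (nbr x i 1) + M.E t (nbr x i (-1))) := by
  induction t with
  | zero => simp [E]
  | succ t ih =>
    have hE : ∀ y, M.E (t + 1) y = M.E t y + (M.S (t + 1)).indicator (M.η t) y := by
      intro y; rw [E, Finset.sum_range_succ]; rfl
    rw [M.evolve' t x, ih, hE]
    have hsplit : (∑ i : Fin d, (M.E (t+1) (nbr x i 1) + M.E (t+1) (nbr x i (-1))))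
        = (∑ i : Fin d, (M.E t (nbr x i 1) + M.E t (nbr x i (-1))))
          + ∑ i : Fin d, ((M.S (t + 1)).indicator (M.η t) (nbr x i 1)
            + (M.S (t + 1)).indicator (M.η t) (nbr x i (-1))) := by
      rw [← Finset.sum_add_distrib]
      exact Finset.sum_congr rfl fun i _ => by rw [hE, hE]; ring
    rw [hsplit]; ring

/-- The last time at which `y` splits. -/
noncomputable def tau (M : SplittingModel d n h) (y : Fin d → ℤ) : ℕ :=
  sSup {t | y ∈ M.S t}

lemma tau_mem (M : SplittingModel d n h) (hstab : M.Stabilizes) {y : Fin d → ℤ}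
    (hy : y ∈ M.T) : y ∈ M.S (M.tau y) := by
  have hne : {t | y ∈ M.S t}.Nonempty := by
    obtain ⟨t, ht⟩ := Set.mem_iUnion.mp hy; exact ⟨t, ht⟩
  exact Nat.sSup_mem hne (hstab y).bddAbove

lemma le_tau (M : SplittingModel d n h) (hstab : M.Stabilizes) {y : Fin d → ℤ} {t : ℕ}
    (ht : y ∈ M.S t) : t ≤ M.tau y := le_csSup (hstab y).bddAbove ht

lemma tau_pos (M : SplittingModel d n h) (hstab : M.Stabilizes) {y : Fin d → ℤ}
    (hy : y ∈ M.T) : 1 ≤ M.tau y := by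
  have hm := M.tau_mem hstab hy
  rcases Nat.eq_zero_or_pos (M.tau y) with h0 | h1
  · rw [h0, M.S_zero] at hm; exact absurd hm (Set.notMem_empty y)
  · exact h1

open Classical in
/-- `G M t y i ε = 1` if the neighbor `nbr y i ε` splits at some time in
`[tau y, t]`, and `0` otherwise. -/
noncomputable def G (M : SplittingModel d n h) (t : ℕ) (y : Fin d → ℤ) (i : Fin d)
    (ε : ℤ) : ℝ :=
  if ∃ s, M.tau y ≤ s ∧ s ≤ t ∧ nbr y i ε ∈ M.S s then 1 else 0

lemma G_nonneg (M : SplittingModel d n h) (t : ℕ) (y : Fin d → ℤ) (i : Fin d) (ε : ℤ) :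
    0 ≤ M.G t y i ε := by
  unfold G; split <;> norm_num

lemma G_eq_one (M : SplittingModel d n h) {t s : ℕ} {y : Fin d → ℤ} {i : Fin d} {ε : ℤ}
    (hs : M.tau y ≤ s) (hst : s ≤ t) (hmem : nbr y i ε ∈ M.S s) : M.G t y i ε = 1 := by
  unfold G; rw [if_pos ⟨s, hs, hst, hmem⟩]

lemma G_le_step (M : SplittingModel d n h) (t : ℕ)
    (y : Fin d → ℤ) (i : Fin d) (ε : ℤ) :
    M.G (t + 1) y i ε ≤ M.G t y i ε + (M.S (t + 1)).indicator (M.η t) (nbr y i ε) := by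
  by_cases hc : ∃ s, M.tau y ≤ s ∧ s ≤ t + 1 ∧ nbr y i ε ∈ M.S s
  · obtain ⟨s, h1, h2, h3⟩ := hc
    rcases Nat.lt_or_ge s (t + 1) with hlt | hge
    · have hG : M.G t y i ε = 1 := M.G_eq_one h1 (by omega) h3
      have := M.ind_nonneg t (nbr y i ε)
      have hle : M.G (t+1) y i ε ≤ 1 := by unfold G; split <;> norm_num
      linarith
    · have hs : s = t + 1 := by omega
      subst hs
      have := M.ind_ge_one h3
      have := M.G_nonneg t y i ε
      have hle : M.G (t+1) y i ε ≤ 1 := by unfold G; split <;> norm_num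
      linarith
  · have hz : M.G (t + 1) y i ε = 0 := by unfold G; rw [if_neg hc]
    rw [hz]
    have := M.G_nonneg t y i ε
    have := M.ind_nonneg t (nbr y i ε)
    linarith

lemma eta_ge_G (M : SplittingModel d n h) (hstab : M.Stabilizes) {y : Fin d → ℤ}
    (hy : y ∈ M.T) : ∀ t, M.tau y ≤ t →
      (1 / (2 * (d : ℝ))) * ∑ i : Fin d, (M.G t y i 1 + M.G t y i (-1)) ≤ M.η t y := by
  have hd2 : (0:ℝ) ≤ 1 / (2 * (d : ℝ)) := by positivity
  intro t ht
  induction t, ht using Nat.le_induction with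
  | base =>
    have h1 : 1 ≤ M.tau y := M.tau_pos hstab hy
    obtain ⟨t0, ht0⟩ : ∃ t0, M.tau y = t0 + 1 := ⟨M.tau y - 1, by omega⟩
    have hmem : y ∈ M.S (t0 + 1) := ht0 ▸ M.tau_mem hstab hy
    have heq := M.evolve t0 y
    rw [Set.indicator_of_notMem (by simpa using hmem)] at heq
    rw [ht0, heq, zero_add]
    apply mul_le_mul_of_nonneg_left _ hd2
    apply Finset.sum_le_sum
    intro i _
    have key : ∀ ε : ℤ, M.G (t0 + 1) y i ε ≤ (M.S (t0 + 1)).indicator (M.η t0) (nbr y i ε) := by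
      intro ε
      unfold G
      split
      · next hc =>
        obtain ⟨s, hs1, hs2, hs3⟩ := hc
        have hseq : s = t0 + 1 := by omega
        exact hseq ▸ M.ind_ge_one (hseq ▸ hs3)
      · exact M.ind_nonneg t0 (nbr y i ε)
    exact add_le_add (key 1) (key (-1))
  | succ t ht ih =>
    have hnot : y ∉ M.S (t + 1) := fun hmem => by
      have := M.le_tau hstab hmem; omega
    have heq := M.evolve' t y
    rw [Set.indicator_of_notMem hnot] at heq
    have hsum : ∑ i : Fin d, (M.G (t+1) y i 1 + M.G (t+1) y i (-1))
        ≤ (∑ i : Fin d, (M.G t y i 1 + M.G t y i (-1)))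
          + ∑ i : Fin d, ((M.S (t + 1)).indicator (M.η t) (nbr y i 1)
            + (M.S (t + 1)).indicator (M.η t) (nbr y i (-1))) := by
      rw [← Finset.sum_add_distrib]
      apply Finset.sum_le_sum
      intro i _
      have a := M.G_le_step t y i 1
      have b := M.G_le_step t y i (-1)
      linarith
    have h2 := mul_le_mul_of_nonneg_left hsum hd2
    rw [mul_add] at h2
    rw [heq]
    linarith

lemma pairing (M : SplittingModel d n h) (hstab : M.Stabilizes) {y : Fin d → ℤ}
    (hy : y ∈ M.T) {i : Fin d} (hz : nbr y i 1 ∈ M.T) {t : ℕ}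
    (hty : M.tau y ≤ t) (htz : M.tau (nbr y i 1) ≤ t) :
    1 ≤ M.G t y i 1 + M.G t (nbr y i 1) i (-1) := by
  rcases le_total (M.tau y) (M.tau (nbr y i 1)) with hle | hle
  · have h1 : M.G t y i 1 = 1 := M.G_eq_one hle htz (M.tau_mem hstab hz)
    have := M.G_nonneg t (nbr y i 1) i (-1)
    linarith
  · have hyy : nbr (nbr y i 1) i (-1) = y := nbr_nbr y i 1
    have h1 : M.G t (nbr y i 1) i (-1) = 1 :=
      M.G_eq_one hle hty (by rw [hyy]; exact M.tau_mem hstab hy)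
    have := M.G_nonneg t y i 1
    linarith

lemma emit_eq_E (M : SplittingModel d n h) (t : ℕ) (y : Fin d → ℤ)
    (hY : ∀ s, t ≤ s → y ∉ M.S (s + 1)) : M.emit y = M.E t y := by
  rw [emit, E]
  exact tsum_eq_sum fun s hs =>
    Set.indicator_of_notMem (hY s (by simpa using hs)) _

lemma lap_avgEmit (M : SplittingModel d n h) (k : ℕ) (x : Fin d → ℤ) :
    lap (M.avgEmit k) x
      = ((2 * (k : ℝ) + 1) ^ d)⁻¹ * ∑ y ∈ Qcube k x, lap M.emit y := by
  have e1 : ∑ y ∈ Qcube k x, lap M.emit y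
      = (1 / (2 * (d:ℝ))) * ∑ i : Fin d,
          (∑ y ∈ Qcube k x, M.emit (nbr y i 1) + ∑ y ∈ Qcube k x, M.emit (nbr y i (-1)))
        - ∑ y ∈ Qcube k x, M.emit y := by
    simp only [lap]
    rw [Finset.sum_sub_distrib, ← Finset.mul_sum, Finset.sum_comm]
    congr 2
    exact Finset.sum_congr rfl fun i _ => Finset.sum_add_distrib
  have e0 : lap (M.avgEmit k) x
      = (1 / (2 * (d:ℝ))) * ∑ i : Fin d,
          (((2 * (k : ℝ) + 1) ^ d)⁻¹ * ∑ y ∈ Qcube k x, M.emit (nbr y i 1)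
            + ((2 * (k : ℝ) + 1) ^ d)⁻¹ * ∑ y ∈ Qcube k x, M.emit (nbr y i (-1)))
        - ((2 * (k : ℝ) + 1) ^ d)⁻¹ * ∑ y ∈ Qcube k x, M.emit y := by
    simp only [lap, SplittingModel.avgEmit, sum_Qcube_nbr]
  have e2 : ∑ i : Fin d,
        (((2 * (k : ℝ) + 1) ^ d)⁻¹ * ∑ y ∈ Qcube k x, M.emit (nbr y i 1)
          + ((2 * (k : ℝ) + 1) ^ d)⁻¹ * ∑ y ∈ Qcube k x, M.emit (nbr y i (-1)))
      = ((2 * (k : ℝ) + 1) ^ d)⁻¹ * ∑ i : Fin d,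
          (∑ y ∈ Qcube k x, M.emit (nbr y i 1) + ∑ y ∈ Qcube k x, M.emit (nbr y i (-1))) := by
    rw [Finset.mul_sum]
    exact Finset.sum_congr rfl fun i _ => (mul_add _ _ _).symm
  rw [e0, e1, e2]; ring

end SplittingModel

/-- For the splitting model on `ℤ^d` with any valid splitting order, `h < 1`,
`n ≥ 0`, assuming the model stabilizes: for `k ≥ 1` and every `x` with
`Q_k(x) ⊆ T`, one has
`Δu^{(k)}(x) ≥ k/(2k+1) - h - (n-h)(2k+1)^{-d} 𝟙[0 ∈ Q_k(x)]`. -/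
theorem avgEmit_laplacian_bound {d : ℕ} (hd : 1 ≤ d) {n h : ℝ}
    (hh : h < 1) (hn : 0 ≤ n)
    (M : SplittingModel d n h) (hM : M.Valid) (hstab : M.Stabilizes)
    (k : ℕ) (hk : 1 ≤ k) (x : Fin d → ℤ) (hx : ∀ y ∈ Qcube k x, y ∈ M.T) :
    (k : ℝ) / (2 * k + 1) - h
        - (n - h) * ((2 * (k : ℝ) + 1) ^ d)⁻¹ *
            (if (0 : Fin d → ℤ) ∈ Qcube k x then (1 : ℝ) else 0)
      ≤ lap (M.avgEmit k) x := by
  classical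
  -- Setup: a time `N` after which nothing in the enlarged cube splits anymore.
  have hfin : (⋃ z ∈ (Qcube (k+1) x : Set (Fin d → ℤ)), {t | z ∈ M.S t}).Finite :=
    Set.Finite.biUnion (Qcube (k+1) x).finite_toSet (fun z _ => hstab z)
  obtain ⟨N, hN⟩ := hfin.bddAbove
  have hNle : ∀ z ∈ Qcube (k+1) x, ∀ t, z ∈ M.S t → t ≤ N := by
    intro z hz t ht
    exact hN (Set.mem_biUnion (Finset.mem_coe.mpr hz) ht)
  have hnot : ∀ z ∈ Qcube (k+1) x, ∀ s, N ≤ s → z ∉ M.S (s + 1) := by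
    intro z hz s hs hmem
    have := hNle z hz (s+1) hmem; omega
  have htauN : ∀ z ∈ Qcube (k+1) x, z ∈ M.T → M.tau z ≤ N := fun z hz hzT =>
    hNle z hz _ (M.tau_mem hstab hzT)
  -- the Laplacian of `u` on the cube
  have hlap : ∀ y ∈ Qcube k x, lap M.emit y = M.η N y - M.η 0 y := by
    intro y hy
    have e0 : M.emit y = M.E N y :=
      M.emit_eq_E N y (hnot y (Qcube_subset_succ hy))
    have ee : ∀ (i : Fin d) (ε : ℤ), ε = 1 ∨ ε = -1 →
        M.emit (nbr y i ε) = M.E N (nbr y i ε) := fun i ε hε =>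
      M.emit_eq_E N _ (hnot _ (nbr_mem_Qcube_succ hy hε))
    have hsc : ∑ i : Fin d, (M.emit (nbr y i 1) + M.emit (nbr y i (-1)))
        = ∑ i : Fin d, (M.E N (nbr y i 1) + M.E N (nbr y i (-1))) :=
      Finset.sum_congr rfl fun i _ => by
        rw [ee i 1 (Or.inl rfl), ee i (-1) (Or.inr rfl)]
    rw [lap, e0, hsc]
    have hq := M.eta_eq N y
    linarith
  have hlapsum : ∑ y ∈ Qcube k x, lap M.emit y
      = ∑ y ∈ Qcube k x, M.η N y - ∑ y ∈ Qcube k x, M.η 0 y := by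
    rw [← Finset.sum_sub_distrib]
    exact Finset.sum_congr rfl hlap
  -- initial mass over the cube
  have hsum0 : ∑ y ∈ Qcube k x, M.η 0 y
      = h * (2 * (k : ℝ) + 1) ^ d
        + (n - h) * (if (0 : Fin d → ℤ) ∈ Qcube k x then (1:ℝ) else 0) := by
    have hη0 : ∀ y : Fin d → ℤ, M.η 0 y = (if y = 0 then n - h else 0) + h := by
      intro y
      by_cases hy : y = 0
      · subst hy; rw [M.init_origin, if_pos rfl]; ring
      · rw [M.init_other y hy, if_neg hy]; ring
    rw [Finset.sum_congr rfl fun y _ => hη0 y, Finset.sum_add_distrib,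
      Finset.sum_ite_eq' (Qcube k x) 0 (fun _ => n - h), Finset.sum_const, card_Qcube,
      nsmul_eq_mul]
    split_ifs <;> · push_cast; ring
  -- lower bound on the final mass over the cube
  have hd0 : (0:ℝ) < (d:ℝ) := by exact_mod_cast hd
  have hc2 : (0:ℝ) ≤ 1 / (2 * (d:ℝ)) := by positivity
  have hside : ∀ i : Fin d, (2 * (k:ℝ) * (2 * (k:ℝ) + 1) ^ (d - 1))
      ≤ ∑ y ∈ Qcube k x, M.G N y i 1 + ∑ y ∈ Qcube k x, M.G N y i (-1) := by
    intro i
    have hA : ∑ y ∈ Qside k x i, M.G N y i 1 ≤ ∑ y ∈ Qcube k x, M.G N y i 1 :=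
      Finset.sum_le_sum_of_subset_of_nonneg Qside_subset fun y _ _ => M.G_nonneg N y i 1
    have himg : (Qside k x i).image (fun y => nbr y i 1) ⊆ Qcube k x := by
      intro z hz
      obtain ⟨y, hy, rfl⟩ := Finset.mem_image.mp hz
      exact Qside_nbr_mem hy
    have himg_eq : ∑ z ∈ (Qside k x i).image (fun y => nbr y i 1), M.G N z i (-1)
        = ∑ y ∈ Qside k x i, M.G N (nbr y i 1) i (-1) :=
      Finset.sum_image fun a _ b _ hab => nbr_inj i 1 hab
    have hB : ∑ y ∈ Qside k x i, M.G N (nbr y i 1) i (-1)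
        ≤ ∑ y ∈ Qcube k x, M.G N y i (-1) := by
      rw [← himg_eq]
      exact Finset.sum_le_sum_of_subset_of_nonneg himg fun y _ _ => M.G_nonneg N y i (-1)
    have hP : ((Qside k x i).card : ℝ)
        ≤ ∑ y ∈ Qside k x i, (M.G N y i 1 + M.G N (nbr y i 1) i (-1)) := by
      have hcard : ((Qside k x i).card : ℝ) = ∑ _y ∈ Qside k x i, (1:ℝ) := by
        rw [Finset.sum_const, nsmul_eq_mul, mul_one]
      rw [hcard]
      apply Finset.sum_le_sum
      intro y hy
      have hyQ : y ∈ Qcube k x := Qside_subset hy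
      have hzQ : nbr y i 1 ∈ Qcube k x := Qside_nbr_mem hy
      exact M.pairing hstab (hx y hyQ) (hx _ hzQ)
        (htauN y (Qcube_subset_succ hyQ) (hx y hyQ))
        (htauN _ (Qcube_subset_succ hzQ) (hx _ hzQ))
    have hPcard : ((Qside k x i).card : ℝ) = 2 * (k:ℝ) * (2 * (k:ℝ) + 1) ^ (d - 1) := by
      rw [card_Qside]; push_cast; ring
    rw [Finset.sum_add_distrib] at hP
    linarith
  have hGtot : (d:ℝ) * (2 * (k:ℝ) * (2 * (k:ℝ) + 1) ^ (d - 1))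
      ≤ ∑ i : Fin d, (∑ y ∈ Qcube k x, M.G N y i 1 + ∑ y ∈ Qcube k x, M.G N y i (-1)) := by
    have : (d:ℝ) * (2 * (k:ℝ) * (2 * (k:ℝ) + 1) ^ (d - 1))
        = ∑ _i : Fin d, (2 * (k:ℝ) * (2 * (k:ℝ) + 1) ^ (d - 1)) := by
      rw [Finset.sum_const, Finset.card_univ, Fintype.card_fin, nsmul_eq_mul]
    rw [this]
    exact Finset.sum_le_sum fun i _ => hside i
  have hηN : (k:ℝ) * (2 * (k:ℝ) + 1) ^ (d - 1) ≤ ∑ y ∈ Qcube k x, M.η N y := by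
    have h1 : ∑ y ∈ Qcube k x,
        (1 / (2 * (d:ℝ))) * ∑ i : Fin d, (M.G N y i 1 + M.G N y i (-1))
        ≤ ∑ y ∈ Qcube k x, M.η N y := by
      apply Finset.sum_le_sum
      intro y hy
      exact M.eta_ge_G hstab (hx y hy) N (htauN y (Qcube_subset_succ hy) (hx y hy))
    have h2 : ∑ y ∈ Qcube k x,
        (1 / (2 * (d:ℝ))) * ∑ i : Fin d, (M.G N y i 1 + M.G N y i (-1))
        = (1 / (2 * (d:ℝ))) * ∑ i : Fin d,
            (∑ y ∈ Qcube k x, M.G N y i 1 + ∑ y ∈ Qcube k x, M.G N y i (-1)) := by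
      rw [← Finset.mul_sum, Finset.sum_comm]
      congr 1
      exact Finset.sum_congr rfl fun i _ => Finset.sum_add_distrib
    have h3 := mul_le_mul_of_nonneg_left hGtot hc2
    have h4 : (1 / (2 * (d:ℝ))) * ((d:ℝ) * (2 * (k:ℝ) * (2 * (k:ℝ) + 1) ^ (d - 1)))
        = (k:ℝ) * (2 * (k:ℝ) + 1) ^ (d - 1) := by
      field_simp
    rw [h4] at h3
    rw [h2] at h1
    linarith
  -- conclusion
  have hP0 : (0:ℝ) < 2 * (k:ℝ) + 1 := by positivity
  have hPd : (0:ℝ) < (2 * (k:ℝ) + 1) ^ d := by positivity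
  have hcinv : ((2 * (k:ℝ) + 1) ^ d)⁻¹ * (2 * (k:ℝ) + 1) ^ d = 1 :=
    inv_mul_cancel₀ hPd.ne'
  have hpow : (2 * (k:ℝ) + 1) ^ d = (2 * (k:ℝ) + 1) ^ (d - 1) * (2 * (k:ℝ) + 1) := by
    rw [← pow_succ]
    congr 1
    omega
  have hfrac : (k:ℝ) / (2 * (k:ℝ) + 1)
      = ((2 * (k:ℝ) + 1) ^ d)⁻¹ * ((k:ℝ) * (2 * (k:ℝ) + 1) ^ (d - 1)) := by
    rw [hpow]
    rw [div_eq_iff hP0.ne']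
    field_simp
  have hmono := mul_le_mul_of_nonneg_left hηN (le_of_lt (inv_pos.mpr hPd))
  rw [M.lap_avgEmit k x, hlapsum, hsum0]
  have hexp : ((2 * (k:ℝ) + 1) ^ d)⁻¹ *
      (∑ y ∈ Qcube k x, M.η N y
        - (h * (2 * (k : ℝ) + 1) ^ d
            + (n - h) * (if (0 : Fin d → ℤ) ∈ Qcube k x then (1:ℝ) else 0)))
      = ((2 * (k:ℝ) + 1) ^ d)⁻¹ * ∑ y ∈ Qcube k x, M.η N y
        - h * (((2 * (k:ℝ) + 1) ^ d)⁻¹ * (2 * (k:ℝ) + 1) ^ d)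
        - (n - h) * ((2 * (k : ℝ) + 1) ^ d)⁻¹ *
            (if (0 : Fin d → ℤ) ∈ Qcube k x then (1:ℝ) else 0) := by
    ring
  rw [hexp, hcinv, mul_one]
  rw [hfrac]
  linarith
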